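/- For each θ ∈ [0,2π)², the eigenvalues of the 3×3 Floquet matrix Δ_θ of the Kagome lattice are μ₁ = 3/2 and μ_± = 3/4 ± (1/4)√(3 + 2κ(θ)), where κ(θ) = cos θ₁ + cos θ₂ + cos(θ₁ - θ₂). In particular, 3/2 is an eigenvalue of Δ_θ for every θ. -/
import Mathlib


open Complex

/-- The Floquet (θ-equivariant) combinatorial Laplacian of the Kagome lattice on a
combinatorial fundamental domain of three vertices. -/
noncomputable def kagomeFloquet (θ₁ θ₂ : ℝ) : Matrix (Fin 3) (Fin 3) ℂ :=
  (1 / 4 : ℂ) •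
    !![4, -1 - exp (-I * θ₂), -exp (-I * θ₁) - exp (-I * θ₂);
       -1 - exp (I * θ₂), 4, -1 - exp (-I * θ₁);
       -exp (I * θ₁) - exp (I * θ₂), -1 - exp (I * θ₁), 4]

/-- For each `θ ∈ [0,2π)²`, the eigenvalues of the Kagome Floquet matrix `Δ_θ`
are `3/2` and `3/4 ± (1/4)√(3 + 2κ(θ))`, with `κ(θ) = cos θ₁ + cos θ₂ + cos(θ₁-θ₂)`.
In particular `3/2` is an eigenvalue of `Δ_θ` for every `θ`. -/
theorem kagomeFloquet_eigenvalues (θ₁ θ₂ : ℝ)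
    (h₁ : θ₁ ∈ Set.Ico 0 (2 * Real.pi)) (h₂ : θ₂ ∈ Set.Ico 0 (2 * Real.pi)) :
    spectrum ℂ (kagomeFloquet θ₁ θ₂) =
        {(3 / 2 : ℂ),
         ((3 / 4 + Real.sqrt (3 + 2 * (Real.cos θ₁ + Real.cos θ₂ + Real.cos (θ₁ - θ₂))) / 4
            : ℝ) : ℂ),
         ((3 / 4 - Real.sqrt (3 + 2 * (Real.cos θ₁ + Real.cos θ₂ + Real.cos (θ₁ - θ₂))) / 4
            : ℝ) : ℂ)} ∧
      (3 / 2 : ℂ) ∈ spectrum ℂ (kagomeFloquet θ₁ θ₂) := by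
  set s : ℝ := Real.sqrt (3 + 2 * (Real.cos θ₁ + Real.cos θ₂ + Real.cos (θ₁ - θ₂))) with hs
  have hnn : 0 ≤ 3 + 2 * (Real.cos θ₁ + Real.cos θ₂ + Real.cos (θ₁ - θ₂)) := by
    nlinarith [Real.sin_sq_add_cos_sq θ₁, Real.sin_sq_add_cos_sq θ₂, Real.cos_sub θ₁ θ₂,
      sq_nonneg (1 + Real.cos θ₁ + Real.cos θ₂), sq_nonneg (Real.sin θ₁ + Real.sin θ₂)]
  have hsR : s ^ 2 = 3 + 2 * (Real.cos θ₁ + Real.cos θ₂ +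
      (Real.cos θ₁ * Real.cos θ₂ + Real.sin θ₁ * Real.sin θ₂)) := by
    rw [hs, Real.sq_sqrt hnn, Real.cos_sub]
  have hsC : ((s : ℝ) : ℂ) ^ 2 = 3 + 2 * (cos (θ₁ : ℂ) + cos (θ₂ : ℂ) +
      (cos (θ₁ : ℂ) * cos (θ₂ : ℂ) + sin (θ₁ : ℂ) * sin (θ₂ : ℂ))) := by
    have := congrArg (Complex.ofReal) hsR
    push_cast at this
    exact this
  have h1 : sin (θ₁ : ℂ) ^ 2 + cos (θ₁ : ℂ) ^ 2 = 1 := Complex.sin_sq_add_cos_sq _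
  have h2 : sin (θ₂ : ℂ) ^ 2 + cos (θ₂ : ℂ) ^ 2 = 1 := Complex.sin_sq_add_cos_sq _
  have hI : (I : ℂ) ^ 2 = -1 := Complex.I_sq
  have ha : exp (Complex.I * (θ₁ : ℂ)) = cos (θ₁ : ℂ) + sin (θ₁ : ℂ) * Complex.I := by
    rw [mul_comm, Complex.exp_mul_I]
  have ha' : exp (-(Complex.I * (θ₁ : ℂ))) = cos (θ₁ : ℂ) - sin (θ₁ : ℂ) * Complex.I := by
    rw [show -(Complex.I * (θ₁ : ℂ)) = (-(θ₁ : ℂ)) * Complex.I by ring, Complex.exp_mul_I,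
      Complex.cos_neg, Complex.sin_neg]
    ring
  have hb : exp (Complex.I * (θ₂ : ℂ)) = cos (θ₂ : ℂ) + sin (θ₂ : ℂ) * Complex.I := by
    rw [mul_comm, Complex.exp_mul_I]
  have hb' : exp (-(Complex.I * (θ₂ : ℂ))) = cos (θ₂ : ℂ) - sin (θ₂ : ℂ) * Complex.I := by
    rw [show -(Complex.I * (θ₂ : ℂ)) = (-(θ₂ : ℂ)) * Complex.I by ring, Complex.exp_mul_I,
      Complex.cos_neg, Complex.sin_neg]
    ring
  have key : ∀ μ : ℂ, μ ∈ spectrum ℂ (kagomeFloquet θ₁ θ₂) ↔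
      (μ - 3 / 2) * (μ - ((3 / 4 + s / 4 : ℝ) : ℂ)) * (μ - ((3 / 4 - s / 4 : ℝ) : ℂ)) = 0 := by
    intro μ
    rw [spectrum.mem_iff, Matrix.isUnit_iff_isUnit_det, isUnit_iff_ne_zero, not_not]
    have hdet : Matrix.det (algebraMap ℂ (Matrix (Fin 3) (Fin 3) ℂ) μ - kagomeFloquet θ₁ θ₂) =
        (μ - 3 / 2) * (μ - ((3 / 4 + s / 4 : ℝ) : ℂ)) * (μ - ((3 / 4 - s / 4 : ℝ) : ℂ)) := by
      simp only [kagomeFloquet, Matrix.det_fin_three, Matrix.sub_apply, Matrix.smul_apply,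
        Matrix.algebraMap_matrix_apply]
      simp [Matrix.cons_val_two, Matrix.tail_cons]
      rw [ha, ha', hb, hb']
      push_cast
      linear_combination (5 / 32 + cos (θ₂ : ℂ) / 32 - μ / 8) * h1 +
        (5 / 32 + cos (θ₁ : ℂ) / 32 - μ / 8) * h2 + (μ - 3 / 2) / 16 * hsC +
        (-(5 / 32) * sin (θ₂ : ℂ) ^ 2 - 3 / 16 * sin (θ₁ : ℂ) * sin (θ₂ : ℂ)
          - 5 / 32 * sin (θ₁ : ℂ) ^ 2 - sin (θ₁ : ℂ) ^ 2 * cos (θ₂ : ℂ) / 32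
          - cos (θ₁ : ℂ) * sin (θ₂ : ℂ) ^ 2 / 32
          + μ / 8 * (sin (θ₂ : ℂ) ^ 2 + sin (θ₁ : ℂ) * sin (θ₂ : ℂ) + sin (θ₁ : ℂ) ^ 2)) * hI
    rw [hdet]
  constructor
  · ext μ
    rw [key μ]
    simp only [Set.mem_insert_iff, Set.mem_singleton_iff, mul_eq_zero, sub_eq_zero]
    tauto
  · rw [key (3 / 2 : ℂ)]
    ring
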